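/- arXiv:1803.07085 — 7 statements merged into one kernel-verified Lean document; each statement's English description precedes it below -/
import Mathlib

section
/- Let $H_\Lambda > 0$ and $\bar{a} > 0$, and let $a : \mathbb{R} \to (0,\infty)$ be a continuous function satisfying $\lim_{t \to -\infty} a(t) e^{-H_\Lambda t} = \bar{a}$. Fix $t_f \in \mathbb{R}$. Then $\lim_{t \to -\infty} a(t) \int_{t}^{t_f} \frac{ds}{a(s)} = \frac{1}{H_\Lambda}$. (Equivalently, along the past boundary the product $a \cdot r$ of the scale factor and comoving radius along a radial null ray converges to $1/H_\Lambda$, so the induced boundary metric is $-2\,d\lambda\,dv + H_\Lambda^{-2} d\Omega^2$.) -/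
open Real Filter MeasureTheory Set intervalIntegral

set_option maxHeartbeats 1000000

/-- For an asymptotically de Sitter scale factor (continuous, positive,
with `a t * exp (-HΛ t) → abar` as `t → -∞`) and any fixed `tf`, the product of the
scale factor and the comoving radius along a radial null ray,
`a t * ∫_t^{tf} ds / a s`, converges to `1 / HΛ` as `t → -∞`. -/
theorem stmt_1 (HΛ abar : ℝ) (hHΛ : 0 < HΛ) (habar : 0 < abar)
    (a : ℝ → ℝ) (ha_cont : Continuous a) (ha_pos : ∀ t, 0 < a t)
    (ha_lim : Tendsto (fun t => a t * Real.exp (-HΛ * t)) atBot (nhds abar))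
    (tf : ℝ) :
    Tendsto (fun t => a t * ∫ s in t..tf, 1 / a s) atBot (nhds (1 / HΛ)) := by
  have hacont : Continuous (fun s => 1 / a s) :=
    continuous_const.div ha_cont fun x => (ha_pos x).ne'
  have hInt : ∀ u v : ℝ, IntervalIntegrable (fun s => 1 / a s) volume u v :=
    fun u v => hacont.intervalIntegrable u v
  have hexpc : Continuous (fun s : ℝ => Real.exp (-HΛ * s)) :=
    Real.continuous_exp.comp (continuous_const.mul continuous_id)
  have hIexp : ∀ u v : ℝ, (∫ s in u..v, Real.exp (-HΛ * s))
      = (Real.exp (-HΛ * u) - Real.exp (-HΛ * v)) / HΛ := by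
    intro u v
    rw [intervalIntegral.integral_comp_mul_left (fun x => Real.exp x)
      (neg_ne_zero.2 hHΛ.ne'), integral_exp, smul_eq_mul]
    field_simp [hHΛ.ne']
    ring
  rw [Metric.tendsto_nhds]
  intro ε hε
  set δ : ℝ := min (abar / 2) (abar * HΛ * ε / 16) with hδdef
  have hδ0 : 0 < δ := lt_min (by positivity) (by positivity)
  have hδ1 : δ ≤ abar / 2 := min_le_left _ _
  have hδ2 : δ ≤ abar * HΛ * ε / 16 := min_le_right _ _
  have hδab : δ < abar := lt_of_le_of_lt hδ1 (by linarith)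
  have hp1 : (0:ℝ) < abar + δ := by linarith
  have hp2 : (0:ℝ) < abar - δ := by linarith
  obtain ⟨T₀, hT₀⟩ := eventually_atBot.1 (Metric.tendsto_nhds.1 ha_lim δ hδ0)
  set T : ℝ := min T₀ tf with hTdef
  have hTT₀ : T ≤ T₀ := min_le_left _ _
  have hTtf : T ≤ tf := min_le_right _ _
  have hbound : ∀ s, s ≤ T → abar - δ < a s * Real.exp (-HΛ * s) ∧
      a s * Real.exp (-HΛ * s) < abar + δ := by
    intro s hs
    have h := hT₀ s (le_trans hs hTT₀)
    rw [Real.dist_eq, abs_lt] at h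
    exact ⟨by linarith [h.1], by linarith [h.2]⟩
  set C : ℝ := ∫ s in T..tf, 1 / a s with hC
  have hC0 : 0 ≤ C :=
    intervalIntegral.integral_nonneg hTtf (fun x _ => div_nonneg zero_le_one (ha_pos x).le)
  set l₁ : ℝ := (abar - δ) / ((abar + δ) * HΛ) with hl₁def
  set l₂ : ℝ := (abar + δ) / ((abar - δ) * HΛ) with hl₂def
  have hH : HΛ * (1 / HΛ) = 1 := by field_simp
  have h1 : 1 / HΛ - ε < l₁ := by
    rw [hl₁def, lt_div_iff₀ (mul_pos hp1 hHΛ)]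
    nlinarith [mul_pos hHΛ hε, mul_pos (mul_pos habar hHΛ) hε, mul_pos hδ0 (mul_pos hHΛ hε)]
  have h2 : l₂ < 1 / HΛ + ε := by
    rw [hl₂def, div_lt_iff₀ (mul_pos hp2 hHΛ)]
    nlinarith [mul_pos hHΛ hε, mul_pos (mul_pos habar hHΛ) hε, mul_pos hδ0 (mul_pos hHΛ hε)]
  -- the inverse exponential tends to 0 at -∞
  have hinner : Tendsto (fun t : ℝ => -HΛ * t) atBot atTop := by
    have h := (tendsto_neg_atBot_atTop : Tendsto (fun t : ℝ => -t) atBot atTop).const_mul_atTop hHΛ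
    simpa [mul_neg, neg_mul] using h
  have hu : Tendsto (fun t : ℝ => (Real.exp (-HΛ * t))⁻¹) atBot (nhds 0) :=
    tendsto_inv_atTop_zero.comp (Real.tendsto_exp_atTop.comp hinner)
  -- lower and upper bounding functions
  set fL : ℝ → ℝ := fun t => (abar - δ) / Real.exp (-HΛ * t) *
      ((Real.exp (-HΛ * t) - Real.exp (-HΛ * T)) / ((abar + δ) * HΛ) + C) with hfLdef
  set fU : ℝ → ℝ := fun t => (abar + δ) / Real.exp (-HΛ * t) *
      ((Real.exp (-HΛ * t) - Real.exp (-HΛ * T)) / ((abar - δ) * HΛ) + C) with hfUdef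
  have hfL : Tendsto fL atBot (nhds l₁) := by
    have haux : Tendsto (fun t : ℝ => l₁ * (1 - Real.exp (-HΛ * T) * (Real.exp (-HΛ * t))⁻¹)
        + (abar - δ) * C * (Real.exp (-HΛ * t))⁻¹) atBot
        (nhds (l₁ * (1 - Real.exp (-HΛ * T) * 0) + (abar - δ) * C * 0)) :=
      (tendsto_const_nhds.mul (tendsto_const_nhds.sub (tendsto_const_nhds.mul hu))).add
        (tendsto_const_nhds.mul hu)
    simp only [mul_zero, sub_zero, add_zero, mul_one] at haux
    refine haux.congr fun t => ?_
    rw [hfLdef, hl₁def]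
    have h0 : Real.exp (-HΛ * t) ≠ 0 := (Real.exp_pos _).ne'
    field_simp [h0, hHΛ.ne', hp1.ne', hp2.ne']
  have hfU : Tendsto fU atBot (nhds l₂) := by
    have haux : Tendsto (fun t : ℝ => l₂ * (1 - Real.exp (-HΛ * T) * (Real.exp (-HΛ * t))⁻¹)
        + (abar + δ) * C * (Real.exp (-HΛ * t))⁻¹) atBot
        (nhds (l₂ * (1 - Real.exp (-HΛ * T) * 0) + (abar + δ) * C * 0)) :=
      (tendsto_const_nhds.mul (tendsto_const_nhds.sub (tendsto_const_nhds.mul hu))).add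
        (tendsto_const_nhds.mul hu)
    simp only [mul_zero, sub_zero, add_zero, mul_one] at haux
    refine haux.congr fun t => ?_
    rw [hfUdef, hl₂def]
    have h0 : Real.exp (-HΛ * t) ≠ 0 := (Real.exp_pos _).ne'
    field_simp [h0, hHΛ.ne', hp1.ne', hp2.ne']
  have hevL : ∀ᶠ t in atBot, 1 / HΛ - ε < fL t := hfL.eventually (eventually_gt_nhds h1)
  have hevU : ∀ᶠ t in atBot, fU t < 1 / HΛ + ε := hfU.eventually (eventually_lt_nhds h2)
  have hmain : ∀ᶠ t in atBot, fL t ≤ a t * ∫ s in t..tf, 1 / a s ∧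
      a t * ∫ s in t..tf, 1 / a s ≤ fU t := by
    rw [eventually_atBot]
    refine ⟨T, fun t ht => ?_⟩
    have het : (0:ℝ) < Real.exp (-HΛ * t) := Real.exp_pos _
    have heT : Real.exp (-HΛ * T) ≤ Real.exp (-HΛ * t) :=
      Real.exp_le_exp.2 (by nlinarith)
    have hsplit : (∫ s in t..tf, 1 / a s) = (∫ s in t..T, 1 / a s) + C :=
      (intervalIntegral.integral_add_adjacent_intervals (hInt t T) (hInt T tf)).symm
    -- pointwise bounds on 1/a on [t, T]
    have hlowI : (Real.exp (-HΛ * t) - Real.exp (-HΛ * T)) / ((abar + δ) * HΛ)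
        ≤ ∫ s in t..T, 1 / a s := by
      have hmono : (∫ s in t..T, Real.exp (-HΛ * s) / (abar + δ)) ≤ ∫ s in t..T, 1 / a s := by
        refine intervalIntegral.integral_mono_on ht
          ((hexpc.div_const (abar + δ)).intervalIntegrable t T) (hInt t T) (fun s hs => ?_)
        obtain ⟨hb1, hb2⟩ := hbound s hs.2
        rw [div_le_div_iff₀ hp1 (ha_pos s)]
        nlinarith
      calc (Real.exp (-HΛ * t) - Real.exp (-HΛ * T)) / ((abar + δ) * HΛ)
          = ∫ s in t..T, Real.exp (-HΛ * s) / (abar + δ) := by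
            rw [intervalIntegral.integral_div, hIexp]
            field_simp [hHΛ.ne', hp1.ne']
        _ ≤ ∫ s in t..T, 1 / a s := hmono
    have huppI : (∫ s in t..T, 1 / a s)
        ≤ (Real.exp (-HΛ * t) - Real.exp (-HΛ * T)) / ((abar - δ) * HΛ) := by
      have hmono : (∫ s in t..T, 1 / a s) ≤ ∫ s in t..T, Real.exp (-HΛ * s) / (abar - δ) := by
        refine intervalIntegral.integral_mono_on ht (hInt t T)
          ((hexpc.div_const (abar - δ)).intervalIntegrable t T) (fun s hs => ?_)
        obtain ⟨hb1, hb2⟩ := hbound s hs.2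
        rw [div_le_div_iff₀ (ha_pos s) hp2]
        nlinarith
      calc (∫ s in t..T, 1 / a s)
          ≤ ∫ s in t..T, Real.exp (-HΛ * s) / (abar - δ) := hmono
        _ = (Real.exp (-HΛ * t) - Real.exp (-HΛ * T)) / ((abar - δ) * HΛ) := by
            rw [intervalIntegral.integral_div, hIexp]
            field_simp [hHΛ.ne', hp2.ne']
    obtain ⟨hat1, hat2⟩ := hbound t ht
    have haL : (abar - δ) / Real.exp (-HΛ * t) ≤ a t := by
      rw [div_le_iff₀ het]; linarith
    have haU : a t ≤ (abar + δ) / Real.exp (-HΛ * t) := by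
      rw [le_div_iff₀ het]; linarith
    have hIlow0 : 0 ≤ (Real.exp (-HΛ * t) - Real.exp (-HΛ * T)) / ((abar + δ) * HΛ) + C := by
      have h' : (0:ℝ) ≤ (Real.exp (-HΛ * t) - Real.exp (-HΛ * T)) / ((abar + δ) * HΛ) :=
        div_nonneg (by linarith) (mul_pos hp1 hHΛ).le
      linarith
    have hInonneg : 0 ≤ ∫ s in t..tf, 1 / a s :=
      intervalIntegral.integral_nonneg (le_trans ht hTtf) (fun x _ => div_nonneg zero_le_one (ha_pos x).le)
    constructor
    · rw [hfLdef, hsplit]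
      exact mul_le_mul haL (by linarith) hIlow0 (ha_pos t).le
    · rw [hfUdef, hsplit]
      refine mul_le_mul haU (by linarith) ?_ (div_nonneg hp1.le het.le)
      rw [← hsplit]; exact hInonneg
  filter_upwards [hmain, hevL, hevU] with t hm hL hU
  rw [Real.dist_eq, abs_lt]
  exact ⟨by linarith [hm.1], by linarith [hm.2]⟩
end

section
/- Let $H_\Lambda > 0$, $\bar{a} > 0$ and let $a(t) = \dfrac{\bar{a}}{e^{H_\Lambda t} + e^{-H_\Lambda t}}$, with Hubble parameter $H(t) = a'(t)/a(t)$. Then for all $t \in \mathbb{R}$, $\dfrac{H'(t)}{a(t)^2} = -\dfrac{4 H_\Lambda^2}{\bar{a}^2}$. In particular $\dot{H}/a^2$ converges as $t \to -\infty$, so the past boundary of this spacetime is not a parallely propagated curvature singularity. -/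
open Real Filter Set

/-- For the extendible toy model `a t = abar / (e^{HΛ t} + e^{-HΛ t})`
with Hubble parameter `H = a'/a`, one has `H' t / a t ^ 2 = -4 HΛ^2 / abar^2` for
all `t`; in particular `H'/a^2` converges as `t → -∞`, so the past boundary is not
a parallely propagated curvature singularity. -/
theorem stmt_8 (HΛ abar : ℝ) (hHΛ : 0 < HΛ) (habar : 0 < abar)
    (a H : ℝ → ℝ)
    (ha : a = fun t => abar / (Real.exp (HΛ * t) + Real.exp (-HΛ * t)))
    (hHdef : H = fun t => deriv a t / a t) :
    (∀ t, deriv H t / a t ^ 2 = -(4 * HΛ ^ 2 / abar ^ 2)) ∧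
    Tendsto (fun t => deriv H t / a t ^ 2) atBot (nhds (-(4 * HΛ ^ 2 / abar ^ 2))) := by
  have hspos : ∀ t : ℝ, 0 < Real.exp (HΛ * t) + Real.exp (-HΛ * t) := fun t =>
    add_pos (Real.exp_pos _) (Real.exp_pos _)
  have hsne : ∀ t : ℝ, Real.exp (HΛ * t) + Real.exp (-HΛ * t) ≠ 0 := fun t => (hspos t).ne'
  have hu : ∀ t : ℝ, HasDerivAt (fun x => Real.exp (HΛ * x)) (Real.exp (HΛ * t) * HΛ) t := by
    intro t
    have h1 : HasDerivAt (fun x : ℝ => HΛ * x) HΛ t := by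
      simpa using (hasDerivAt_id t).const_mul HΛ
    exact h1.exp
  have hv : ∀ t : ℝ, HasDerivAt (fun x => Real.exp (-HΛ * x)) (Real.exp (-HΛ * t) * (-HΛ)) t := by
    intro t
    have h1 : HasDerivAt (fun x : ℝ => -HΛ * x) (-HΛ) t := by
      simpa using (hasDerivAt_id t).const_mul (-HΛ)
    exact h1.exp
  have hs : ∀ t : ℝ, HasDerivAt (fun x => Real.exp (HΛ * x) + Real.exp (-HΛ * x))
      (Real.exp (HΛ * t) * HΛ + Real.exp (-HΛ * t) * (-HΛ)) t := fun t => (hu t).add (hv t)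
  have ha' : ∀ t : ℝ, HasDerivAt a
      ((0 * (Real.exp (HΛ * t) + Real.exp (-HΛ * t)) -
        abar * (Real.exp (HΛ * t) * HΛ + Real.exp (-HΛ * t) * (-HΛ))) /
        (Real.exp (HΛ * t) + Real.exp (-HΛ * t)) ^ 2) t := by
    intro t
    rw [ha]
    exact (hasDerivAt_const t abar).div (hs t) (hsne t)
  -- H as explicit function
  have hH : H = fun t => -HΛ * ((Real.exp (HΛ * t) - Real.exp (-HΛ * t)) /
      (Real.exp (HΛ * t) + Real.exp (-HΛ * t))) := by
    rw [hHdef]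
    funext t
    rw [(ha' t).deriv, ha]
    have := hsne t
    field_simp
    ring
  have hH' : ∀ t : ℝ, HasDerivAt H
      (-HΛ * (((Real.exp (HΛ * t) * HΛ - Real.exp (-HΛ * t) * (-HΛ)) *
          (Real.exp (HΛ * t) + Real.exp (-HΛ * t)) -
        (Real.exp (HΛ * t) - Real.exp (-HΛ * t)) *
          (Real.exp (HΛ * t) * HΛ + Real.exp (-HΛ * t) * (-HΛ))) /
        (Real.exp (HΛ * t) + Real.exp (-HΛ * t)) ^ 2)) t := by
    intro t
    rw [hH]
    exact (((hu t).sub (hv t)).div (hs t) (hsne t)).const_mul (-HΛ)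
  have key : ∀ t, deriv H t / a t ^ 2 = -(4 * HΛ ^ 2 / abar ^ 2) := by
    intro t
    rw [(hH' t).deriv, ha]
    have hne := hsne t
    have he : Real.exp (HΛ * t) * Real.exp (-(HΛ * t)) = 1 := by
      rw [← Real.exp_add]; simp
    field_simp
    linear_combination (-4) * he
  refine ⟨key, ?_⟩
  have : (fun t => deriv H t / a t ^ 2) = fun _ => -(4 * HΛ ^ 2 / abar ^ 2) := funext key
  rw [this]
  exact tendsto_const_nhds
end

section
/- Let $H_\Lambda > 0$, $\bar{a} > 0$, let $a(t) = \dfrac{\bar{a}}{e^{H_\Lambda t} + e^{-H_\Lambda t}}$, and let $\eta(t) = \dfrac{e^{H_\Lambda t} - e^{-H_\Lambda t}}{\bar{a} H_\Lambda}$ and $\lambda(t) = \dfrac{\bar{a}}{H_\Lambda} \arctan(e^{H_\Lambda t})$. Then: (i) $\eta'(t) = 1/a(t)$ for all $t$ (so $\eta$ is the conformal time), and $\eta$ maps $\mathbb{R}$ bijectively onto $\mathbb{R}$; (ii) for all $t$, $a(t)\,\eta(t) = -\dfrac{1}{H_\Lambda} \cos\!\Big(\dfrac{2 H_\Lambda \lambda(t)}{\bar{a}}\Big)$.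 -/
open Real Filter Set

/-- For the extendible toy model `a t = abar / (e^{HΛ t} + e^{-HΛ t})`,
with `eta t = (e^{HΛ t} - e^{-HΛ t}) / (abar HΛ)` and
`lam t = (abar/HΛ) arctan (e^{HΛ t})`:
(i) `eta' = 1 / a` (so `eta` is the conformal time) and `eta` is a bijection of `ℝ`
onto `ℝ`; (ii) `a t * eta t = -(1/HΛ) cos (2 HΛ lam t / abar)` for all `t`. -/
theorem stmt_10 (HΛ abar : ℝ) (hHΛ : 0 < HΛ) (habar : 0 < abar)
    (a eta lam : ℝ → ℝ)
    (ha : a = fun t => abar / (Real.exp (HΛ * t) + Real.exp (-HΛ * t)))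
    (heta : eta = fun t => (Real.exp (HΛ * t) - Real.exp (-HΛ * t)) / (abar * HΛ))
    (hlam : lam = fun t => abar / HΛ * Real.arctan (Real.exp (HΛ * t))) :
    (∀ t, HasDerivAt eta (1 / a t) t) ∧
    Function.Bijective eta ∧
    (∀ t, a t * eta t = -(1 / HΛ) * Real.cos (2 * HΛ * lam t / abar)) := by
  have hsum : ∀ t : ℝ, 0 < Real.exp (HΛ * t) + Real.exp (-HΛ * t) := fun t =>
    add_pos (Real.exp_pos _) (Real.exp_pos _)
  refine ⟨?_, ?_, ?_⟩
  · intro t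
    have h1 : HasDerivAt (fun t : ℝ => Real.exp (HΛ * t)) (Real.exp (HΛ * t) * HΛ) t :=
      by simpa using ((hasDerivAt_id t).const_mul HΛ).exp
    have h2 : HasDerivAt (fun t : ℝ => Real.exp (-HΛ * t)) (Real.exp (-HΛ * t) * (-HΛ)) t :=
      by simpa using ((hasDerivAt_id t).const_mul (-HΛ)).exp
    have h3 := (h1.sub h2).div_const (abar * HΛ)
    rw [heta]
    convert h3 using 1
    · rfl
    · rfl
    · rfl
    rw [ha]
    have h4 := (hsum t).ne'
    field_simp
    ring
  · have : eta = fun t => (2 / (abar * HΛ)) * Real.sinh (HΛ * t) := by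
      rw [heta]; funext t
      rw [Real.sinh_eq]
      field_simp
    rw [this]
    have hc : (2 / (abar * HΛ)) ≠ 0 := by positivity
    refine Function.Bijective.comp ?_ ?_
    · exact (Equiv.mulLeft₀ _ hc).bijective
    · exact Real.sinh_bijective.comp ((Equiv.mulLeft₀ _ hHΛ.ne').bijective)
  · intro t
    rw [ha, heta, hlam]
    simp only
    have harg : 2 * HΛ * (abar / HΛ * Real.arctan (Real.exp (HΛ * t))) / abar
        = 2 * Real.arctan (Real.exp (HΛ * t)) := by
      field_simp
    rw [harg, Real.cos_two_mul, Real.cos_arctan]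
    have hE := Real.exp_pos (HΛ * t)
    have h4 := (hsum t).ne'
    have h5 : Real.exp (-HΛ * t) = (Real.exp (HΛ * t))⁻¹ := by
      rw [← Real.exp_neg]; ring_nf
    have h6 : (Real.sqrt (1 + Real.exp (HΛ * t) ^ 2)) ^ 2 = 1 + Real.exp (HΛ * t) ^ 2 := by
      rw [Real.sq_sqrt]; positivity
    have h7 : Real.sqrt (1 + Real.exp (HΛ * t) ^ 2) ≠ 0 := by positivity
    rw [h5]
    field_simp
    nlinarith [h6, Real.exp_pos (HΛ * t)]
end

section
/- Let $M > 0$, $w \in \mathbb{R}$, let $I \subseteq \mathbb{R}$ be an interval, and let $a : I \to (0,\infty)$ be differentiable with Hubble parameter $H = a'/a$, and $\rho : I \to (0,\infty)$ differentiable. Suppose the continuity equation $\rho'(t) = -3(1+w) H(t) \rho(t)$ and the Friedmann equation $H'(t) = -\dfrac{(1+w)\rho(t)}{2M^2}$ hold on $I$. Then: (i) $\rho(t)\, a(t)^{3(1+w)}$ is constant on $I$, equal to some $C > 0$; (ii) $\dfrac{H'(t)}{a(t)^2} = -\dfrac{(1+w) C}{2 M^2}\, a(t)^{-(5 + 3w)}$;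 and (iii) the function $x \mapsto \dfrac{(1+w) C}{2M^2} x^{-(5+3w)}$ on $(0,\infty)$ has a finite limit as $x \to 0^+$ if and only if $w = -1$ or $w \leq -5/3$. -/
open Real Filter Set Topology

lemma const_of_deriv_zero {s : Set ℝ} (hs : Convex ℝ s) {f : ℝ → ℝ}
    (hf : ∀ x ∈ s, HasDerivAt f 0 x) {x y : ℝ} (hx : x ∈ s) (hy : y ∈ s) : f x = f y := by
  have h := hs.norm_image_sub_le_of_norm_hasFDerivWithin_le
    (f' := fun _ => (0 : ℝ →L[ℝ] ℝ)) (C := 0)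
    (fun z hz => by
      have := (hf z hz).hasFDerivAt.hasFDerivWithinAt (s := s)
      have h0 : ContinuousLinearMap.toSpanSingleton ℝ (0:ℝ) = 0 := by ext; simp
      rw [h0] at this
      exact this)
    (fun z _ => by simp) hy hx
  have : ‖f x - f y‖ ≤ 0 := by simpa using h
  have : f x - f y = 0 := by
    have := norm_le_zero_iff.mp this
    simpa using this
  linarith [this]

/-- For a perfect fluid with equation of state `P = w ρ` in flat FLRW
spacetime (continuity equation `ρ' = -3(1+w) H ρ`, Friedmann equation
`H' = -(1+w) ρ / (2 M²)`, `H = a'/a`) on an interval `I`: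
(i) `ρ a^{3(1+w)}` is constant on `I`, equal to some `C > 0`;
(ii) `H' / a² = -((1+w) C / (2 M²)) a^{-(5+3w)}` on `I`;
(iii) the function `x ↦ ((1+w) C / (2 M²)) x^{-(5+3w)}` on `(0,∞)` has a finite
limit as `x → 0⁺` if and only if `w = -1` or `w ≤ -5/3`. -/
theorem stmt_11 (M w : ℝ) (hM : 0 < M) (I : Set ℝ) (hI : I.OrdConnected)
    (a H H' ρ : ℝ → ℝ)
    (ha_pos : ∀ t ∈ I, 0 < a t) (hρ_pos : ∀ t ∈ I, 0 < ρ t)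
    (ha : ∀ t ∈ I, HasDerivAt a (H t * a t) t)
    (hcont : ∀ t ∈ I, HasDerivAt ρ (-3 * (1 + w) * H t * ρ t) t)
    (hHd : ∀ t ∈ I, HasDerivAt H (H' t) t)
    (hFried : ∀ t ∈ I, H' t = -((1 + w) * ρ t) / (2 * M ^ 2)) :
    ∃ C : ℝ, 0 < C ∧
      (∀ t ∈ I, ρ t * a t ^ (3 * (1 + w)) = C) ∧
      (∀ t ∈ I, H' t / a t ^ 2 = -((1 + w) * C) / (2 * M ^ 2) * a t ^ (-(5 + 3 * w))) ∧
      ((∃ L : ℝ, Tendsto (fun x : ℝ => (1 + w) * C / (2 * M ^ 2) * x ^ (-(5 + 3 * w)))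
          (nhdsWithin 0 (Ioi 0)) (nhds L)) ↔ (w = -1 ∨ w ≤ -5 / 3)) := by
  -- the function ρ * a^{3(1+w)} has zero derivative on I
  set k : ℝ := 3 * (1 + w) with hk
  have hderiv : ∀ t ∈ I, HasDerivAt (fun t => ρ t * a t ^ k) 0 t := by
    intro t ht
    have hap := ha_pos t ht
    have hA : HasDerivAt (fun t => a t ^ k) ((H t * a t) * k * a t ^ (k - 1)) t :=
      (ha t ht).rpow_const (Or.inl hap.ne')
    have := (hcont t ht).mul hA
    refine this.congr_deriv ?_; symm
    have h1 : a t ^ (k - 1) = a t ^ k / a t := Real.rpow_sub_one hap.ne' k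
    rw [h1]
    field_simp
    ring
  -- the limit statement depends only on C > 0, prove it for any C > 0
  have hlim : ∀ C : ℝ, 0 < C →
      ((∃ L : ℝ, Tendsto (fun x : ℝ => (1 + w) * C / (2 * M ^ 2) * x ^ (-(5 + 3 * w)))
          (nhdsWithin 0 (Ioi 0)) (nhds L)) ↔ (w = -1 ∨ w ≤ -5 / 3)) := by
    intro C hC
    constructor
    · rintro ⟨L, hL⟩
      by_contra hcon
      push_neg at hcon
      obtain ⟨hw1, hw2⟩ := hcon
      have hq : 0 < 5 + 3 * w := by linarith [hw2]
      have hc : (1 + w) * C / (2 * M ^ 2) ≠ 0 := by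
        have : 1 + w ≠ 0 := fun h => hw1 (by linarith)
        positivity
      have h2 : Tendsto (fun x : ℝ => x ^ (5 + 3 * w)) (nhdsWithin 0 (Ioi 0))
          (nhds ((0 : ℝ) ^ (5 + 3 * w))) :=
        ((Real.continuousAt_rpow_const 0 _ (Or.inr hq.le)).tendsto).mono_left
          nhdsWithin_le_nhds
      rw [Real.zero_rpow hq.ne'] at h2
      have h3 := hL.mul h2
      rw [mul_zero] at h3
      have h4 : Tendsto (fun _ : ℝ => (1 + w) * C / (2 * M ^ 2)) (nhdsWithin 0 (Ioi 0))
          (nhds 0) := by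
        refine h3.congr' ?_
        filter_upwards [self_mem_nhdsWithin] with x hx
        have hx0 : (0 : ℝ) < x := hx
        rw [mul_assoc, ← Real.rpow_add hx0, show -(5 + 3 * w) + (5 + 3 * w) = 0 by ring,
          Real.rpow_zero, mul_one]
      exact hc (tendsto_nhds_unique tendsto_const_nhds h4)
    · intro h
      rcases h with h | h
      · refine ⟨0, ?_⟩
        have : (1 + w) = 0 := by rw [h]; ring
        simpa [this] using (tendsto_const_nhds :
          Tendsto (fun _ : ℝ => (0:ℝ)) (nhdsWithin 0 (Ioi 0)) (nhds 0))
      · have hq : 0 ≤ -(5 + 3 * w) := by linarith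
        refine ⟨(1 + w) * C / (2 * M ^ 2) * (0 : ℝ) ^ (-(5 + 3 * w)), ?_⟩
        exact (((Real.continuousAt_rpow_const 0 _ (Or.inr hq)).tendsto).const_mul
          _).mono_left nhdsWithin_le_nhds
  by_cases hne : I.Nonempty
  · obtain ⟨t₀, ht₀⟩ := hne
    refine ⟨ρ t₀ * a t₀ ^ k, ?_, ?_, ?_, ?_⟩
    · have := hρ_pos t₀ ht₀
      have := Real.rpow_pos_of_pos (ha_pos t₀ ht₀) k
      positivity
    · intro t ht
      exact const_of_deriv_zero hI.convex hderiv ht ht₀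
    · intro t ht
      have hC : ρ t₀ * a t₀ ^ k = ρ t * a t ^ k :=
        const_of_deriv_zero hI.convex hderiv ht₀ ht
      rw [hC, hFried t ht]
      have hap := ha_pos t ht
      have h1 : a t ^ k * a t ^ (-(5 + 3 * w)) = (a t ^ 2)⁻¹ := by
        rw [← Real.rpow_add hap]
        have : k + -(5 + 3 * w) = -2 := by rw [hk]; ring
        rw [this, Real.rpow_neg hap.le]
        norm_num [Real.rpow_natCast (a t) 2]
      have h2 : (a t : ℝ) ^ (2:ℕ) ≠ 0 := by positivity
      calc -((1 + w) * ρ t) / (2 * M ^ 2) / a t ^ 2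
          = -((1 + w) * (ρ t * (a t ^ k * a t ^ (-(5 + 3 * w))))) / (2 * M ^ 2) := by
            rw [h1]; field_simp
        _ = -((1 + w) * (ρ t * a t ^ k)) / (2 * M ^ 2) * a t ^ (-(5 + 3 * w)) := by ring
    · exact hlim _ (by
        have := hρ_pos t₀ ht₀
        have := Real.rpow_pos_of_pos (ha_pos t₀ ht₀) k
        positivity)
  · refine ⟨1, one_pos, ?_, ?_, hlim 1 one_pos⟩
    · intro t ht; exact absurd ⟨t, ht⟩ hne
    · intro t ht; exact absurd ⟨t, ht⟩ hne
end

section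
/- Let $M, m > 0$ and $\varphi_e > 0$. Define the Starobinsky potential $V(\varphi) = \dfrac{3}{4} m^2 M^2 \big(1 - e^{-\sqrt{2/3}\,\varphi/M}\big)^2$ for $\varphi > 0$, the e-folding number $\mathcal{N}(\varphi) = \dfrac{1}{M^2}\int_{\varphi_e}^{\varphi} \dfrac{V(\psi)}{V'(\psi)}\, d\psi$, and $f(\varphi) = \dfrac{V'(\varphi)^2}{V(\varphi)}\, e^{2\mathcal{N}(\varphi)}$. Then $\lim_{\varphi \to \infty} f(\varphi) = +\infty$. (Hence the Starobinsky inflationary spacetime has a $C^0$ parallely propagated curvature singularity at its past boundary.) -/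
open Real Filter MeasureTheory Set intervalIntegral

private lemma aux_tendsto_13 (p q r c : ℝ) (hp : 0 < p) (hc : 0 < c) :
    Tendsto (fun x => p * Real.exp (c * x) - q * x + r) atTop atTop := by
  have h0 : Tendsto (fun y : ℝ => Real.exp y / y ^ 1) atTop atTop :=
    Real.tendsto_exp_div_pow_atTop 1
  have hcx : Tendsto (fun x : ℝ => c * x) atTop atTop :=
    tendsto_id.const_mul_atTop hc
  have h1 : Tendsto (fun x => Real.exp (c * x) / (c * x)) atTop atTop := by
    simpa [Function.comp_def] using h0.comp hcx
  have h2 : Tendsto (fun x => p * c * (Real.exp (c * x) / (c * x)) + -q)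
      atTop atTop :=
    tendsto_atTop_add_const_right _ (-q) (h1.const_mul_atTop (by positivity))
  have h3 : Tendsto (fun x : ℝ =>
      x * (p * c * (Real.exp (c * x) / (c * x)) + -q) + r) atTop atTop :=
    tendsto_atTop_add_const_right _ r (tendsto_id.atTop_mul_atTop₀ h2)
  refine h3.congr' ?_
  filter_upwards [eventually_gt_atTop 0] with x hx
  field_simp
  ring

/-- For the Starobinsky potential
`V φ = (3/4) m² M² (1 - e^{-√(2/3) φ/M})²`, with e-folding number
`N φ = (1/M²) ∫_{φe}^{φ} V/V'` and `f φ = (V'(φ)²/V φ) e^{2 N φ}`, the key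
extendibility quantity diverges: `f φ → +∞` as `φ → +∞`. Hence the Starobinsky
inflationary spacetime has a `C⁰` parallely propagated curvature singularity at
its past boundary. -/
theorem stmt_13 (M m φe : ℝ) (hM : 0 < M) (hm : 0 < m) (hφe : 0 < φe)
    (V N f : ℝ → ℝ)
    (hV : V = fun φ => 3 / 4 * m ^ 2 * M ^ 2 *
      (1 - Real.exp (-(Real.sqrt (2 / 3)) * φ / M)) ^ 2)
    (hN : N = fun φ => (1 / M ^ 2) * ∫ ψ in φe..φ, V ψ / deriv V ψ)
    (hf : f = fun φ => deriv V φ ^ 2 / V φ * Real.exp (2 * N φ)) :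
    Tendsto f atTop atTop := by
  set s := Real.sqrt (2 / 3) with hs
  have hspos : 0 < s := Real.sqrt_pos.mpr (by norm_num)
  set c := s / M with hc
  have hcpos : 0 < c := div_pos hspos hM
  set A := 3 / 4 * m ^ 2 * M ^ 2 with hA
  have hApos : 0 < A := by positivity
  -- rewrite V with c
  have hVeq : V = fun φ => A * (1 - Real.exp (-(c * φ))) ^ 2 := by
    rw [hV]; funext φ
    have : -s * φ / M = -(c * φ) := by rw [hc]; ring
    rw [show -s * φ / M = -(c * φ) from this]
  -- derivative of V
  have hV' : ∀ φ : ℝ, HasDerivAt V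
      (A * (2 * (1 - Real.exp (-(c * φ))) * (c * Real.exp (-(c * φ))))) φ := by
    intro φ
    rw [hVeq]
    have h1 : HasDerivAt (fun φ : ℝ => -(c * φ)) (-c) φ := by
      simpa using (hasDerivAt_id φ).const_mul (-c)
    have h2 := h1.exp
    have h3 := ((hasDerivAt_const φ (1 : ℝ)).fun_sub h2).fun_pow 2
    have h4 := h3.const_mul A
    refine h4.congr_deriv ?_
    ring
  have hd : ∀ φ : ℝ, deriv V φ =
      A * (2 * (1 - Real.exp (-(c * φ))) * (c * Real.exp (-(c * φ)))) :=
    fun φ => (hV' φ).deriv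
  -- basic facts about u = exp(-(c ψ)) for ψ > 0
  have hu1 : ∀ ψ : ℝ, 0 < ψ → Real.exp (-(c * ψ)) < 1 := by
    intro ψ hψ
    have : -(c * ψ) < 0 := by nlinarith [mul_pos hcpos hψ]
    simpa using Real.exp_lt_one_iff.mpr this
  -- the integrand simplifies
  have hVdiv : ∀ ψ : ℝ, 0 < ψ →
      V ψ / deriv V ψ = (Real.exp (c * ψ) - 1) / (2 * c) := by
    intro ψ hψ
    have h1 : Real.exp (-(c * ψ)) < 1 := hu1 ψ hψ
    have h0 : (0 : ℝ) < Real.exp (-(c * ψ)) := Real.exp_pos _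
    have hinv : Real.exp (c * ψ) = (Real.exp (-(c * ψ)))⁻¹ := by
      rw [Real.exp_neg, inv_inv]
    rw [hd, hVeq, hinv]
    set u := Real.exp (-(c * ψ)) with hu
    have hsub : (1 : ℝ) - u ≠ 0 := by linarith
    field_simp
    ring
  -- antiderivative
  set F : ℝ → ℝ := fun ψ => (Real.exp (c * ψ) / c - ψ) / (2 * c) with hF
  have hF' : ∀ ψ : ℝ, HasDerivAt F ((Real.exp (c * ψ) - 1) / (2 * c)) ψ := by
    intro ψ
    have h1 : HasDerivAt (fun ψ : ℝ => c * ψ) c ψ := by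
      simpa using (hasDerivAt_id ψ).const_mul c
    have h2 := ((h1.exp.div_const c).fun_sub (hasDerivAt_id ψ)).div_const (2 * c)
    refine h2.congr_deriv ?_
    rw [mul_div_cancel_right₀ _ hcpos.ne']
  -- the integral
  have hInt : ∀ φ : ℝ, φe ≤ φ →
      (∫ ψ in φe..φ, V ψ / deriv V ψ) = F φ - F φe := by
    intro φ hφ
    have hcongr : Set.EqOn (fun ψ => V ψ / deriv V ψ)
        (fun ψ => (Real.exp (c * ψ) - 1) / (2 * c)) (Set.uIcc φe φ) := by
      intro ψ hψ
      rw [Set.uIcc_of_le hφ] at hψ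
      exact hVdiv ψ (lt_of_lt_of_le hφe hψ.1)
    rw [intervalIntegral.integral_congr hcongr]
    have hcont : Continuous fun ψ : ℝ => (Real.exp (c * ψ) - 1) / (2 * c) :=
      ((Real.continuous_exp.comp (continuous_const.mul continuous_id)).sub
        continuous_const).div_const _
    exact intervalIntegral.integral_eq_sub_of_hasDerivAt
      (fun ψ _ => hF' ψ) (hcont.intervalIntegrable _ _)
  -- constants
  set p := 1 / (c ^ 2 * M ^ 2) with hp
  set q := 1 / (c * M ^ 2) + 2 * c with hq
  set r := -(Real.exp (c * φe) / c - φe) / (c * M ^ 2) with hr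
  have hppos : 0 < p := by positivity
  -- f equals an explicit function eventually
  have hfval : ∀ φ : ℝ, φe ≤ φ →
      f φ = 4 * A * c ^ 2 * Real.exp (p * Real.exp (c * φ) - q * φ + r) := by
    intro φ hφ
    have hφ0 : 0 < φ := lt_of_lt_of_le hφe hφ
    have h1 : Real.exp (-(c * φ)) < 1 := hu1 φ hφ0
    have h0 : (0 : ℝ) < Real.exp (-(c * φ)) := Real.exp_pos _
    have hNφ : N φ = (1 / M ^ 2) * (F φ - F φe) := by
      rw [hN]; simp only; rw [hInt φ hφ]
    have e1 : deriv V φ ^ 2 / V φ = 4 * A * c ^ 2 * Real.exp (-(c * φ)) ^ 2 := by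
      rw [hd, hVeq]
      beta_reduce
      set u := Real.exp (-(c * φ)) with hu
      have hsub : (1 : ℝ) - u ≠ 0 := by linarith
      field_simp
      ring
    rw [hf]
    simp only
    rw [e1, hNφ, mul_assoc]
    congr 1
    rw [sq, mul_assoc, ← Real.exp_add, ← Real.exp_add]
    congr 1
    rw [hF, hp, hq, hr]
    simp only
    field_simp
    ring
  -- conclusion
  have hg : Tendsto (fun φ => p * Real.exp (c * φ) - q * φ + r) atTop atTop :=
    aux_tendsto_13 p q r c hppos hcpos
  have hexp : Tendsto
      (fun φ => 4 * A * c ^ 2 *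
        Real.exp (p * Real.exp (c * φ) - q * φ + r)) atTop atTop :=
    (Real.tendsto_exp_atTop.comp hg).const_mul_atTop (by positivity)
  refine hexp.congr' ?_
  filter_upwards [eventually_ge_atTop φe] with φ hφ
  exact (hfval φ hφ).symm
end

section
/- Let $M, m, V_0 > 0$ and $0 < \varphi_e < 2m$. Define the small-field potential $V(\varphi) = V_0\big(1 - (\varphi/2m)^2\big)^2$ for $\varphi \in (0, 2m)$, the e-folding number $\mathcal{N}(\varphi) = \dfrac{1}{M^2}\int_{\varphi_e}^{\varphi} \dfrac{V(\psi)}{V'(\psi)}\, d\psi = -\dfrac{m^2}{M^2}\ln\dfrac{\varphi}{\varphi_e} + \dfrac{\varphi^2 - \varphi_e^2}{8 M^2}$, and $f(\varphi) = \dfrac{V'(\varphi)^2}{V(\varphi)}\, e^{2\mathcal{N}(\varphi)} = \dfrac{V_0}{m^4}\, \varphi^2 \Big(\dfrac{\varphi}{\varphi_e}\Big)^{-2m^2/M^2} e^{(\varphi^2 - \varphi_e^2)/(4M^2)}$. Then $\lim_{\varphi \to 0^+} f(\varphi)$ exists and is finite if and only if $m \leq M$. (Hence, for $m \leq M$, small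 field inflation starting from the infinite past is continuously extendible beyond its past boundary.) -/
open Real Filter MeasureTheory Set intervalIntegral Topology

/-- For the small-field (Higgs-like) potential
`V φ = V0 (1 - (φ/2m)²)²` on `(0, 2m)`, with e-folding number
`N φ = (1/M²) ∫_{φe}^{φ} V/V'` and `f φ = (V'(φ)²/V φ) e^{2 N φ}`:
`N` has the stated closed form, `f` has the stated closed form, and `f` has a
finite limit as `φ → 0⁺` if and only if `m ≤ M`. Hence, for `m ≤ M`, small field
inflation starting from the infinite past is continuously extendible beyond its
past boundary. -/
theorem stmt_14 (M m V0 φe : ℝ) (hM : 0 < M) (hm : 0 < m) (hV0 : 0 < V0)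
    (hφe : 0 < φe) (hφe2 : φe < 2 * m)
    (V N f : ℝ → ℝ)
    (hV : V = fun φ => V0 * (1 - (φ / (2 * m)) ^ 2) ^ 2)
    (hN : N = fun φ => (1 / M ^ 2) * ∫ ψ in φe..φ, V ψ / deriv V ψ)
    (hf : f = fun φ => deriv V φ ^ 2 / V φ * Real.exp (2 * N φ)) :
    (∀ φ ∈ Ioo (0 : ℝ) (2 * m),
      N φ = -(m ^ 2 / M ^ 2) * Real.log (φ / φe) + (φ ^ 2 - φe ^ 2) / (8 * M ^ 2)) ∧
    (∀ φ ∈ Ioo (0 : ℝ) (2 * m),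
      f φ = V0 / m ^ 4 * φ ^ 2 * (φ / φe) ^ (-(2 * m ^ 2 / M ^ 2)) *
        Real.exp ((φ ^ 2 - φe ^ 2) / (4 * M ^ 2))) ∧
    ((∃ L : ℝ, Tendsto f (nhdsWithin 0 (Ioi 0)) (nhds L)) ↔ m ≤ M) := by
  have hm' : (2*m) ≠ 0 := by positivity
  have hm0 : m ≠ 0 := ne_of_gt hm
  have hM2 : (0:ℝ) < M^2 := by positivity
  -- the derivative of V
  have hd : ∀ φ : ℝ, deriv V φ = -(V0 * φ / m^2) * (1 - (φ/(2*m))^2) := by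
    intro φ
    have h1 : HasDerivAt (fun x : ℝ => 1 - (x/(2*m))^2) (-(2 * (φ/(2*m))^1 * (1/(2*m)))) φ := by
      simpa using (((hasDerivAt_id φ).div_const (2*m)).pow 2).const_sub 1
    have h2 := (h1.pow 2).const_mul V0
    rw [hV]
    have h3 : HasDerivAt (fun x : ℝ => V0 * (1 - (x / (2*m))^2)^2)
        (-(V0 * φ / m^2) * (1 - (φ/(2*m))^2)) φ := by
      refine h2.congr_deriv ?_
      simp only [Nat.cast_ofNat, pow_one, Nat.add_one_sub_one]
      field_simp
    exact h3.deriv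
  -- positivity of the factor on the interval
  have hu : ∀ φ ∈ Ioo (0:ℝ) (2*m), 0 < 1 - (φ/(2*m))^2 := by
    intro φ hφ
    have h1 : φ/(2*m) < 1 := (div_lt_one (by linarith)).mpr hφ.2
    have h2 : 0 < φ/(2*m) := div_pos hφ.1 (by linarith)
    nlinarith
  -- closed form for N
  have hNval : ∀ φ ∈ Ioo (0:ℝ) (2*m),
      N φ = -(m ^ 2 / M ^ 2) * Real.log (φ / φe) + (φ ^ 2 - φe ^ 2) / (8 * M ^ 2) := by
    intro φ hφ
    have hsub : uIcc φe φ ⊆ Ioo (0:ℝ) (2*m) :=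
      Set.ordConnected_Ioo.uIcc_subset ⟨hφe, hφe2⟩ hφ
    have h0 : (0:ℝ) ∉ uIcc φe φ := fun h => absurd (hsub h).1 (lt_irrefl 0)
    have hpos : ∀ ψ ∈ uIcc φe φ, ψ ≠ 0 := fun ψ hψ => ne_of_gt (hsub hψ).1
    have hF : ∀ ψ ∈ uIcc φe φ, V ψ / deriv V ψ = -(m^2) * (1/ψ) + ψ/4 := by
      intro ψ hψ
      have hψ' := hsub hψ
      have hψ0 : ψ ≠ 0 := ne_of_gt hψ'.1
      have huψ : (1 - (ψ/(2*m))^2) ≠ 0 := ne_of_gt (hu ψ hψ')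
      have hden : -(V0 * ψ / m^2) * (1 - (ψ/(2*m))^2) ≠ 0 := by
        apply mul_ne_zero _ huψ
        have : 0 < V0 * ψ / m^2 := by
          have := hψ'.1; positivity
        exact neg_ne_zero.mpr (ne_of_gt this)
      rw [hd, hV]
      simp only
      rw [div_eq_iff hden]
      field_simp
      ring
    have hi1 : IntervalIntegrable (fun ψ : ℝ => -(m^2) * (1/ψ)) volume φe φ :=
      (intervalIntegrable_one_div hpos continuousOn_id).const_mul _
    have hi2 : IntervalIntegrable (fun ψ : ℝ => ψ/4) volume φe φ :=
      intervalIntegrable_id.div_const _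
    rw [hN]
    simp only
    rw [intervalIntegral.integral_congr hF, intervalIntegral.integral_add hi1 hi2,
      intervalIntegral.integral_const_mul, intervalIntegral.integral_div,
      integral_one_div h0, integral_id]
    field_simp
    ring
  -- closed form for f
  have hfval : ∀ φ ∈ Ioo (0:ℝ) (2*m),
      f φ = V0 / m ^ 4 * φ ^ 2 * (φ / φe) ^ (-(2 * m ^ 2 / M ^ 2)) *
        Real.exp ((φ ^ 2 - φe ^ 2) / (4 * M ^ 2)) := by
    intro φ hφ
    have hφ0 : φ ≠ 0 := ne_of_gt hφ.1
    have huφ : (1 - (φ/(2*m))^2) ≠ 0 := ne_of_gt (hu φ hφ)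
    have hr : (0:ℝ) < φ/φe := div_pos hφ.1 hφe
    have hVφ : V φ ≠ 0 := by
      rw [hV]; simp only
      exact mul_ne_zero (ne_of_gt hV0) (pow_ne_zero _ huφ)
    have h1 : deriv V φ ^ 2 / V φ = V0 / m^4 * φ^2 := by
      rw [hd, div_eq_iff hVφ, hV]
      simp only
      field_simp
    have h2 : Real.exp (2 * N φ) =
        (φ / φe) ^ (-(2 * m ^ 2 / M ^ 2)) * Real.exp ((φ ^ 2 - φe ^ 2) / (4 * M ^ 2)) := by
      rw [hNval φ hφ, Real.rpow_def_of_pos hr, ← Real.exp_add]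
      congr 1
      field_simp
      ring
    rw [hf]
    simp only
    rw [h1, h2]
    ring
  refine ⟨hNval, hfval, ?_⟩
  -- limit criterion
  set a : ℝ := 2 * m^2 / M^2 with ha
  have haM : a ≤ 2 ↔ m ≤ M := by
    rw [ha, div_le_iff₀ hM2]
    constructor
    · intro h; nlinarith
    · intro h; nlinarith
  set K : ℝ := V0 / m^4 * φe ^ a * Real.exp (-φe^2 / (4*M^2)) with hK
  have hKpos : 0 < K := by
    have : (0:ℝ) < φe ^ a := Real.rpow_pos_of_pos hφe a
    positivity
  set g : ℝ → ℝ := fun φ => K * φ ^ ((2:ℝ) - a) * Real.exp (φ^2 / (4*M^2)) with hg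
  have hfg : ∀ᶠ φ in 𝓝[>] (0:ℝ), f φ = g φ := by
    filter_upwards [Ioo_mem_nhdsGT_of_mem
      (show (0:ℝ) ∈ Ico 0 (2*m) from ⟨le_refl 0, by linarith⟩)] with φ hφ
    have hφ0 : 0 < φ := hφ.1
    show f φ = K * φ ^ ((2:ℝ) - a) * Real.exp (φ^2 / (4*M^2))
    rw [hfval φ hφ]
    have e1 : (φ/φe) ^ (-a) = φ ^ (-a) * φe ^ a := by
      rw [Real.div_rpow hφ0.le hφe.le, Real.rpow_neg hφe.le, div_eq_mul_inv, inv_inv]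
    have e2 : φ^2 * φ ^ (-a) = φ ^ ((2:ℝ) - a) := by
      rw [sub_eq_add_neg, Real.rpow_add hφ0, ← Real.rpow_natCast φ 2]
      norm_num
    have e3 : Real.exp ((φ ^ 2 - φe ^ 2) / (4 * M ^ 2)) =
        Real.exp (φ^2 / (4*M^2)) * Real.exp (-φe^2 / (4*M^2)) := by
      rw [← Real.exp_add]; congr 1; ring
    rw [e3, ← e2, hK]
    have : (φ / φe) ^ (-(2 * m ^ 2 / M ^ 2)) = φ ^ (-a) * φe ^ a := e1
    rw [this]
    ring
  have hexp : Tendsto (fun φ : ℝ => Real.exp (φ^2 / (4*M^2))) (𝓝[>] (0:ℝ)) (𝓝 1) := by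
    have hc : Continuous (fun φ : ℝ => Real.exp (φ^2 / (4*M^2))) := Real.continuous_exp.comp ((continuous_pow 2).div_const (4*M^2))
    have h : Tendsto (fun φ : ℝ => Real.exp (φ^2 / (4*M^2))) (𝓝[>] (0:ℝ))
        (𝓝 (Real.exp ((0:ℝ)^2 / (4*M^2)))) := (hc.tendsto 0).mono_left nhdsWithin_le_nhds
    simpa using h
  constructor
  · rintro ⟨L, hL⟩
    by_contra hMm
    push_neg at hMm
    have ha2 : 2 < a := by
      by_contra h
      push_neg at h
      exact absurd (haM.mp h) (not_le.mpr hMm)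
    have hpow : Tendsto (fun φ : ℝ => φ ^ ((2:ℝ) - a)) (𝓝[>] (0:ℝ)) atTop := by
      have h1 : Tendsto (fun φ : ℝ => φ ^ (a - 2)) (𝓝[>] (0:ℝ)) (𝓝[>] (0:ℝ)) := by
        rw [tendsto_nhdsWithin_iff]
        constructor
        · have hc : ContinuousAt (fun φ : ℝ => φ ^ (a - 2)) 0 :=
            Real.continuousAt_rpow_const 0 (a - 2) (Or.inr (by linarith))
          have h : Tendsto (fun φ : ℝ => φ ^ (a - 2)) (𝓝[>] (0:ℝ)) (𝓝 ((0:ℝ) ^ (a - 2))) :=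
            hc.tendsto.mono_left nhdsWithin_le_nhds
          rwa [Real.zero_rpow (ne_of_gt (by linarith : (0:ℝ) < a - 2))] at h
        · filter_upwards [self_mem_nhdsWithin] with φ hφ
          exact Real.rpow_pos_of_pos hφ _
      have h2 := h1.inv_tendsto_nhdsGT_zero
      apply h2.congr'
      filter_upwards [self_mem_nhdsWithin] with φ (hφ : (0:ℝ) < φ)
      show (φ ^ (a - 2))⁻¹ = φ ^ ((2:ℝ) - a)
      rw [← Real.rpow_neg hφ.le]
      congr 1
      ring
    have hgA : Tendsto g (𝓝[>] (0:ℝ)) atTop := by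
      have h1 : Tendsto (fun φ : ℝ => φ ^ ((2:ℝ) - a) * Real.exp (φ^2 / (4*M^2)))
          (𝓝[>] (0:ℝ)) atTop := hpow.atTop_mul_pos one_pos hexp
      have h2 := h1.const_mul_atTop hKpos
      apply h2.congr
      intro φ
      show K * (φ ^ ((2:ℝ) - a) * Real.exp (φ^2 / (4*M^2))) = g φ
      rw [hg]; ring
    have hfA : Tendsto f (𝓝[>] (0:ℝ)) atTop := hgA.congr' (hfg.mono fun _ h => h.symm)
    exact not_tendsto_atTop_of_tendsto_nhds hL hfA
  · intro hmM
    have ha2 : a ≤ 2 := haM.mpr hmM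
    refine ⟨K * (0:ℝ) ^ ((2:ℝ) - a) * 1, ?_⟩
    have hpow : Tendsto (fun φ : ℝ => φ ^ ((2:ℝ) - a)) (𝓝[>] (0:ℝ))
        (𝓝 ((0:ℝ) ^ ((2:ℝ) - a))) := by
      have hc : ContinuousAt (fun φ : ℝ => φ ^ ((2:ℝ) - a)) 0 :=
        Real.continuousAt_rpow_const 0 ((2:ℝ) - a) (Or.inr (by linarith))
      exact hc.tendsto.mono_left nhdsWithin_le_nhds
    have hgL : Tendsto g (𝓝[>] (0:ℝ)) (𝓝 (K * (0:ℝ) ^ ((2:ℝ) - a) * 1)) :=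
      (tendsto_const_nhds.mul hpow).mul hexp
    exact hgL.congr' (hfg.mono fun _ h => h.symm)
end

section
/- Let $H_\Lambda > 0$. Define, for $t_g \in \mathbb{R}$ and $\psi \in (0, \pi)$, $\lambda(t_g, \psi) = \dfrac{1}{H_\Lambda^2}\big(\cosh(H_\Lambda t_g)\cos\psi + \sinh(H_\Lambda t_g)\big)$ and $v(t_g, \psi) = -\dfrac{1 - e^{H_\Lambda t_g} \tan(\psi/2)}{e^{H_\Lambda t_g} + \tan(\psi/2)}$. Then the following identities hold for all $t_g \in \mathbb{R}$ and $\psi \in (0,\pi)$: (i) $-2\, \partial_{t_g}\lambda\; \partial_{t_g}v + H_\Lambda^2 \lambda^2 (\partial_{t_g}v)^2 = -1$; (ii) $-\,(\partial_{t_g}\lambda\; \partial_{\psi}v + \partial_{\psi}\lambda\; \partial_{t_g}v) + H_\Lambda^2 \lambda^2\, \partial_{t_g}v\; \partial_{\psi}v = 0$; (iii) $-2\, \partial_{\psi}\lambda\; \partial_{\psi}v + H_\Lambda^2 \lambda^2 (\partial_{\psi}v)^2 = \dfrac{\cosh^2(H_\Lambda t_g)}{H_\Lambda^2}$; (iv)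 $\big(1 + H_\Lambda^2\, \lambda\, v\big)^2 = \cosh^2(H_\Lambda t_g)\, \sin^2\psi$. -/
set_option maxHeartbeats 2000000


open Real Filter Set

/-- The coordinate transformation from global de Sitter coordinates
`(t_g, ψ)` to the null coordinates `(lam, v)`,
`lam = (cosh (HΛ t_g) cos ψ + sinh (HΛ t_g)) / HΛ²`,
`v = -(1 - e^{HΛ t_g} tan (ψ/2)) / (e^{HΛ t_g} + tan (ψ/2))`,
pulls back the extended metric `-2 dλ dv + HΛ² λ² dv² + HΛ⁻²(1 + HΛ² λ v)² dΩ²`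
to the global de Sitter metric
`-dt_g² + HΛ⁻² cosh²(HΛ t_g)(dψ² + sin²ψ dΩ²)`: identities (i)–(iv). -/
theorem stmt_16 (HΛ : ℝ) (hHΛ : 0 < HΛ)
    (lam v : ℝ → ℝ → ℝ)
    (hlam : lam = fun tg ψ =>
      (1 / HΛ ^ 2) * (Real.cosh (HΛ * tg) * Real.cos ψ + Real.sinh (HΛ * tg)))
    (hv : v = fun tg ψ =>
      -(1 - Real.exp (HΛ * tg) * Real.tan (ψ / 2)) /
        (Real.exp (HΛ * tg) + Real.tan (ψ / 2))) :
    ∀ tg : ℝ, ∀ ψ ∈ Ioo (0 : ℝ) Real.pi,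
      (-2 * deriv (fun s => lam s ψ) tg * deriv (fun s => v s ψ) tg
        + HΛ ^ 2 * lam tg ψ ^ 2 * (deriv (fun s => v s ψ) tg) ^ 2 = -1) ∧
      (-(deriv (fun s => lam s ψ) tg * deriv (fun x => v tg x) ψ
          + deriv (fun x => lam tg x) ψ * deriv (fun s => v s ψ) tg)
        + HΛ ^ 2 * lam tg ψ ^ 2 * deriv (fun s => v s ψ) tg
          * deriv (fun x => v tg x) ψ = 0) ∧
      (-2 * deriv (fun x => lam tg x) ψ * deriv (fun x => v tg x) ψ
        + HΛ ^ 2 * lam tg ψ ^ 2 * (deriv (fun x => v tg x) ψ) ^ 2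
        = Real.cosh (HΛ * tg) ^ 2 / HΛ ^ 2) ∧
      ((1 + HΛ ^ 2 * lam tg ψ * v tg ψ) ^ 2
        = Real.cosh (HΛ * tg) ^ 2 * Real.sin ψ ^ 2) := by
  intro tg ψ hψ
  obtain ⟨hψ0, hψπ⟩ := hψ
  have hπ := Real.pi_pos
  simp only [hlam, hv]
  have hc0 : (0:ℝ) < Real.cos (ψ/2) :=
    Real.cos_pos_of_mem_Ioo ⟨by linarith, by linarith⟩
  have hs0 : (0:ℝ) < Real.sin (ψ/2) :=
    Real.sin_pos_of_pos_of_lt_pi (by linarith) (by linarith)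
  have hcne : Real.cos (ψ/2) ≠ 0 := ne_of_gt hc0
  have hT0 : 0 < Real.tan (ψ/2) := by
    rw [Real.tan_eq_sin_div_cos]; exact div_pos hs0 hc0
  set T := Real.tan (ψ/2) with hTdef
  have hE0 : 0 < Real.exp (HΛ * tg) := Real.exp_pos _
  set E := Real.exp (HΛ * tg) with hEdef
  have hET : 0 < E + T := by linarith
  have h1T : (0:ℝ) < 1 + T^2 := by positivity
  have hpy := Real.sin_sq_add_cos_sq (ψ/2)
  have hsec : 1/Real.cos (ψ/2)^2 = 1 + T^2 := by
    rw [hTdef, Real.tan_eq_sin_div_cos]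
    field_simp
    linarith [hpy]
  have hcosψ : Real.cos ψ = (1 - T^2)/(1+T^2) := by
    have h2 := Real.cos_two_mul (ψ/2)
    rw [show 2*(ψ/2) = ψ by ring] at h2
    rw [h2, hTdef, Real.tan_eq_sin_div_cos]
    field_simp
    nlinarith [hpy]
  have hsinψ : Real.sin ψ = 2*T/(1+T^2) := by
    have h2 := Real.sin_two_mul (ψ/2)
    rw [show 2*(ψ/2) = ψ by ring] at h2
    rw [h2, hTdef, Real.tan_eq_sin_div_cos]
    field_simp
    linear_combination hpy
  have hcosh : Real.cosh (HΛ*tg) = (E + 1/E)/2 := by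
    rw [Real.cosh_eq, Real.exp_neg, one_div, hEdef]
  have hsinh : Real.sinh (HΛ*tg) = (E - 1/E)/2 := by
    rw [Real.sinh_eq, Real.exp_neg, one_div, hEdef]
  -- derivatives in tg
  have hHt : HasDerivAt (fun s : ℝ => HΛ * s) HΛ tg := by
    simpa using (hasDerivAt_id tg).const_mul HΛ
  have hexp : HasDerivAt (fun s => Real.exp (HΛ*s)) (E * HΛ) tg :=
    (Real.hasDerivAt_exp _).comp tg hHt
  have hcoshD : HasDerivAt (fun s => Real.cosh (HΛ*s)) (Real.sinh (HΛ*tg) * HΛ) tg :=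
    (Real.hasDerivAt_cosh _).comp tg hHt
  have hsinhD : HasDerivAt (fun s => Real.sinh (HΛ*s)) (Real.cosh (HΛ*tg) * HΛ) tg :=
    (Real.hasDerivAt_sinh _).comp tg hHt
  have hdlamT : deriv (fun s => 1 / HΛ ^ 2 * (cosh (HΛ * s) * cos ψ + sinh (HΛ * s))) tg = _ := (((hcoshD.mul_const (Real.cos ψ)).add hsinhD).const_mul (1/HΛ^2)).deriv
  have hdvT : deriv (fun s => -(1 - rexp (HΛ * s) * T) / (rexp (HΛ * s) + T)) tg = _ := ((((hexp.mul_const T).const_sub 1).neg).div (hexp.add_const T) (ne_of_gt hET)).deriv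
  -- derivatives in ψ
  have hhalf : HasDerivAt (fun x : ℝ => x/2) (1/2) ψ := (hasDerivAt_id ψ).div_const 2
  have htanD : HasDerivAt (fun x => Real.tan (x/2)) ((1/Real.cos (ψ/2)^2) * (1/2)) ψ :=
    HasDerivAt.comp ψ (h₂ := Real.tan) (Real.hasDerivAt_tan hcne) hhalf
  have hdlamP := ((((Real.hasDerivAt_cos ψ).const_mul (Real.cosh (HΛ*tg))).add_const
      (Real.sinh (HΛ*tg))).const_mul (1/HΛ^2)).deriv
  have hdvP : deriv (fun x => -(1 - E * tan (x / 2)) / (E + tan (x / 2))) ψ = _ := ((((htanD.const_mul E).const_sub 1).neg).div (htanD.const_add E)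
      (ne_of_gt hET)).deriv
  rw [hdlamT, hdvT, hdlamP, hdvP, ← hEdef, ← hTdef]
  simp only [Pi.neg_apply]
  rw [← hEdef, ← hTdef]
  rw [hcosψ, hsinψ, hcosh, hsinh, hsec]
  have hHne : HΛ ≠ 0 := ne_of_gt hHΛ
  have hEne : E ≠ 0 := ne_of_gt hE0
  have hETne : E + T ≠ 0 := ne_of_gt hET
  have h1Tne : (1:ℝ) + T^2 ≠ 0 := ne_of_gt h1T
  refine ⟨?_, ?_, ?_, ?_⟩
  · field_simp
    ring
  · field_simp
    ring
  · field_simp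
    ring
  · field_simp
    ring
end
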